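/- Let C ⊆ ℝⁿ be a nonempty closed convex set and f : ℝⁿ → ℝ be continuously differentiable and convex, with ∇f L-Lipschitz on C (L > 0). Let (x^k), (p^k), (v_k) be Frank–Wolfe sequences for f on C with v_k < 0 for all k, and suppose (x^k) converges to a point x* ∈ C with f(x*) ≤ f(z) for all z ∈ C; set f* := f(x*). Suppose σ > 0 satisfies ‖p^k − x^k‖ ≤ σ for all k, γ > 0 satisfies ‖∇f(x^k)‖ ≤ γ for all k, and set Γ := min{1/(2γσ), 1/(2Lσ²)}. Then f(x^k) − f* ≤ 1/(Γ·k) for all k = 1, 2, …. -/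

import Mathlib

set_option maxHeartbeats 1000000

open scoped RealInnerProductSpace

lemma fw_inner_grad {n : ℕ} (f : EuclideanSpace ℝ (Fin n) → ℝ) (hf : Differentiable ℝ f)
    (a y : EuclideanSpace ℝ (Fin n)) : ⟪gradient f a, y⟫ = fderiv ℝ f a y := by
  have h := (hf a).hasGradientAt.hasFDerivAt.fderiv
  rw [h, InnerProductSpace.toDual_apply_apply]

lemma fw_convex_lower {n : ℕ} (f : EuclideanSpace ℝ (Fin n) → ℝ) (hf : ContDiff ℝ 1 f)
    (hconv : ConvexOn ℝ Set.univ f) (a b : EuclideanSpace ℝ (Fin n)) :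
    f a + ⟪gradient f a, b - a⟫ ≤ f b := by
  have hdiff : Differentiable ℝ f := hf.differentiable one_ne_zero
  set g : ℝ → ℝ := fun t => f (a + t • (b - a)) with hgdef
  have hline : ∀ t : ℝ, (AffineMap.lineMap a b) t = a + t • (b - a) := by
    intro t
    rw [AffineMap.lineMap_apply_module']
    abel
  have hgc : ConvexOn ℝ Set.univ g := by
    have h := hconv.comp_affineMap (AffineMap.lineMap a b)
    have : f ∘ (AffineMap.lineMap a b) = g := by
      funext t; simp [hgdef, hline t]
    rw [this] at h
    simpa using h
  have hd : HasDerivAt g (fderiv ℝ f a (b - a)) 0 := by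
    have h1 : HasDerivAt (fun t : ℝ => a + t • (b - a)) (b - a) 0 := by
      simpa using (((hasDerivAt_id (0 : ℝ)).smul_const (b - a)).const_add a)
    have h2 := (hdiff (a + (0 : ℝ) • (b - a))).hasFDerivAt.comp_hasDerivAt 0 h1
    rw [zero_smul, add_zero] at h2
    exact h2
  have hs := hgc.le_slope_of_hasDerivAt (Set.mem_univ (0 : ℝ)) (Set.mem_univ 1) one_pos hd
  have hsl : slope g 0 1 = f b - f a := by
    rw [slope_def_field]
    simp [hgdef]
  rw [hsl] at hs
  have := fw_inner_grad f hdiff a (b - a)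
  linarith [this ▸ hs]

lemma fw_descent {n : ℕ} (C : Set (EuclideanSpace ℝ (Fin n))) (hCconv : Convex ℝ C)
    (f : EuclideanSpace ℝ (Fin n) → ℝ) (hf : ContDiff ℝ 1 f) (L : ℝ)
    (hLip : ∀ a ∈ C, ∀ b ∈ C, ‖gradient f a - gradient f b‖ ≤ L * ‖a - b‖)
    (a b : EuclideanSpace ℝ (Fin n)) (ha : a ∈ C) (hb : b ∈ C) :
    f b ≤ f a + ⟪gradient f a, b - a⟫ + L / 2 * ‖b - a‖ ^ 2 := by
  have hdiff : Differentiable ℝ f := hf.differentiable one_ne_zero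
  set d : EuclideanSpace ℝ (Fin n) := b - a with hd
  set c : ℝ := fderiv ℝ f a d with hc
  set φ : ℝ → ℝ := fun t => f (a + t • d) - t * c - L * ‖d‖ ^ 2 / 2 * t ^ 2 with hφ
  have hmem : ∀ t ∈ Set.Icc (0 : ℝ) 1, a + t • d ∈ C := by
    intro t ht
    have he : a + t • d = (1 - t) • a + t • b := by rw [hd]; module
    rw [he]
    exact hCconv ha hb (by linarith [ht.2]) ht.1 (by ring)
  have hderiv : ∀ t : ℝ, HasDerivAt φ (fderiv ℝ f (a + t • d) d - c - L * ‖d‖ ^ 2 * t) t := by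
    intro t
    have h1 : HasDerivAt (fun t : ℝ => a + t • d) d t := by
      simpa using (((hasDerivAt_id t).smul_const d).const_add a)
    have h2 : HasDerivAt (fun t : ℝ => f (a + t • d)) (fderiv ℝ f (a + t • d) d) t :=
      (hdiff (a + t • d)).hasFDerivAt.comp_hasDerivAt t h1
    have h3 : HasDerivAt (fun t : ℝ => t * c) c t := hasDerivAt_mul_const c
    have h4 : HasDerivAt (fun t : ℝ => L * ‖d‖ ^ 2 / 2 * t ^ 2)
        (L * ‖d‖ ^ 2 / 2 * (2 * t)) t := by
      simpa using (hasDerivAt_pow 2 t).const_mul (L * ‖d‖ ^ 2 / 2)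
    have h5 := (h2.sub h3).sub h4
    exact h5.congr_deriv (by ring)
  have hanti : AntitoneOn φ (Set.Icc 0 1) := by
    apply antitoneOn_of_deriv_nonpos (convex_Icc 0 1)
    · exact fun t _ => (hderiv t).differentiableAt.continuousAt.continuousWithinAt
    · exact fun t _ => (hderiv t).differentiableAt.differentiableWithinAt
    · intro t ht
      rw [interior_Icc] at ht
      rw [(hderiv t).deriv]
      have hmemt : a + t • d ∈ C := hmem t ⟨ht.1.le, ht.2.le⟩
      have hgrad : fderiv ℝ f (a + t • d) d - c =
          ⟪gradient f (a + t • d) - gradient f a, d⟫ := by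
        rw [inner_sub_left, fw_inner_grad f hdiff, fw_inner_grad f hdiff, hc]
      have hcs : ⟪gradient f (a + t • d) - gradient f a, d⟫ ≤ L * t * ‖d‖ ^ 2 := by
        calc ⟪gradient f (a + t • d) - gradient f a, d⟫
            ≤ ‖gradient f (a + t • d) - gradient f a‖ * ‖d‖ := real_inner_le_norm _ _
          _ ≤ (L * ‖(a + t • d) - a‖) * ‖d‖ :=
              mul_le_mul_of_nonneg_right (hLip _ hmemt _ ha) (norm_nonneg d)
          _ = L * t * ‖d‖ ^ 2 := by
              have : a + t • d - a = t • d := by abel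
              rw [this, norm_smul, Real.norm_eq_abs, abs_of_pos ht.1]
              ring
      linarith [hgrad ▸ hcs]
  have hfin := hanti (Set.left_mem_Icc.mpr zero_le_one) (Set.right_mem_Icc.mpr zero_le_one)
    zero_le_one
  have hφ1 : φ 1 = f b - c - L * ‖d‖ ^ 2 / 2 := by
    simp only [hφ, one_smul, one_pow, one_mul]
    have : a + d = b := by rw [hd]; abel
    rw [this]
    ring
  have hφ0 : φ 0 = f a := by simp [hφ]
  rw [hφ1, hφ0] at hfin
  have hcv : c = ⟪gradient f a, b - a⟫ := by rw [hc, fw_inner_grad f hdiff, hd]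
  rw [hcv] at hfin
  rw [hd] at hfin
  linarith

/-- Iteration-complexity bound for the Frank–Wolfe sequence under convexity:
`f (x k) - f* ≤ 1/(Γ k)` for all `k ≥ 1`, where `Γ = min (1/(2γσ)) (1/(2Lσ²))`. -/
theorem frank_wolfe_complexity_convex (n : ℕ) (C : Set (EuclideanSpace ℝ (Fin n)))
    (hCne : C.Nonempty) (hCcl : IsClosed C) (hCconv : Convex ℝ C)
    (f : EuclideanSpace ℝ (Fin n) → ℝ) (hf : ContDiff ℝ 1 f)
    (hconv : ConvexOn ℝ Set.univ f)
    (L : ℝ) (hL : 0 < L)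
    (hLip : ∀ a ∈ C, ∀ b ∈ C, ‖gradient f a - gradient f b‖ ≤ L * ‖a - b‖)
    (x p : ℕ → EuclideanSpace ℝ (Fin n)) (v : ℕ → ℝ)
    (hx0 : x 0 ∈ C) (hpC : ∀ k, p k ∈ C)
    (hpmin : ∀ k, ∀ q ∈ C, ⟪gradient f (x k), p k - x k⟫ ≤ ⟪gradient f (x k), q - x k⟫)
    (hv : ∀ k, v k = ⟪gradient f (x k), p k - x k⟫)
    (hiter : ∀ k, x (k + 1) =
      x k + (min 1 (|v k| / (L * ‖p k - x k‖ ^ 2))) • (p k - x k))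
    (hvneg : ∀ k, v k < 0)
    (xstar : EuclideanSpace ℝ (Fin n)) (hxstar : xstar ∈ C)
    (hlim : Filter.Tendsto x Filter.atTop (nhds xstar))
    (hopt : ∀ z ∈ C, f xstar ≤ f z)
    (σ : ℝ) (hσ : 0 < σ) (hσb : ∀ k, ‖p k - x k‖ ≤ σ)
    (γ : ℝ) (hγ : 0 < γ) (hγb : ∀ k, ‖gradient f (x k)‖ ≤ γ)
    (Γ : ℝ) (hΓ : Γ = min (1 / (2 * γ * σ)) (1 / (2 * L * σ ^ 2))) :
    ∀ k : ℕ, 1 ≤ k → f (x k) - f xstar ≤ 1 / (Γ * k) := by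
  have hdiff : Differentiable ℝ f := hf.differentiable one_ne_zero
  have hΓpos : 0 < Γ := by
    rw [hΓ]
    apply lt_min <;> positivity
  have hΓ1 : Γ ≤ 1 / (2 * γ * σ) := hΓ ▸ min_le_left _ _
  have hΓ2 : Γ ≤ 1 / (2 * L * σ ^ 2) := hΓ ▸ min_le_right _ _
  have hdpos : ∀ k, 0 < ‖p k - x k‖ := by
    intro k
    rw [norm_pos_iff]
    intro h0
    have hvk := hv k
    rw [h0] at hvk
    simp at hvk
    exact absurd hvk (by linarith [hvneg k] : v k ≠ 0)
  set lam : ℕ → ℝ := fun k => min 1 (|v k| / (L * ‖p k - x k‖ ^ 2)) with hlam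
  have hlam0 : ∀ k, 0 ≤ lam k := fun k => le_min zero_le_one (by positivity)
  have hlam1 : ∀ k, lam k ≤ 1 := fun k => min_le_left _ _
  have hxC : ∀ k, x k ∈ C := by
    intro k
    induction k with
    | zero => exact hx0
    | succ k ih =>
      rw [hiter k]
      have he : x k + (min 1 (|v k| / (L * ‖p k - x k‖ ^ 2))) • (p k - x k)
          = (1 - lam k) • x k + lam k • p k := by
        rw [hlam]; module
      rw [he]
      exact hCconv ih (hpC k) (by linarith [hlam1 k]) (hlam0 k) (by ring)
  -- per-step decrease
  have hstep : ∀ k, f (x (k + 1)) ≤ f (x k) - Γ * (v k) ^ 2 := by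
    intro k
    have hs : (0 : ℝ) < L * ‖p k - x k‖ ^ 2 := mul_pos hL (pow_pos (hdpos k) 2)
    have hm : |v k| = -v k := abs_of_neg (hvneg k)
    have hdesc := fw_descent C hCconv f hf L hLip (x k) (x (k + 1)) (hxC k) (hxC (k + 1))
    have hxd : x (k + 1) - x k = lam k • (p k - x k) := by
      rw [hiter k, hlam]; abel
    rw [hxd] at hdesc
    have hin : ⟪gradient f (x k), lam k • (p k - x k)⟫ = lam k * v k := by
      rw [real_inner_smul_right, hv k]
    have hnrm : ‖lam k • (p k - x k)‖ ^ 2 = lam k ^ 2 * ‖p k - x k‖ ^ 2 := by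
      rw [norm_smul, Real.norm_eq_abs, abs_of_nonneg (hlam0 k)]
      ring
    rw [hin, hnrm] at hdesc
    have hmγσ : |v k| ≤ γ * σ := by
      calc |v k| = |⟪gradient f (x k), p k - x k⟫| := by rw [hv k]
        _ ≤ ‖gradient f (x k)‖ * ‖p k - x k‖ := abs_real_inner_le_norm _ _
        _ ≤ γ * σ := mul_le_mul (hγb k) (hσb k) (norm_nonneg _) hγ.le
    have hcore : lam k * v k + L / 2 * (lam k ^ 2 * ‖p k - x k‖ ^ 2) ≤ -Γ * (v k) ^ 2 := by
      set s : ℝ := L * ‖p k - x k‖ ^ 2 with hsdef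
      have hsσ : s ≤ L * σ ^ 2 := by
        rw [hsdef]
        have h := mul_self_le_mul_self (norm_nonneg (p k - x k)) (hσb k)
        nlinarith [hL, h]
      rcases le_or_gt (|v k|) s with hms | hms
      · have hlameq : lam k = |v k| / s := by
          rw [hlam]
          exact min_eq_right ((div_le_one₀ hs).mpr hms)
        rw [hlameq, hm]
        have hΓs : Γ ≤ 1 / (2 * s) := by
          refine le_trans hΓ2 ?_
          apply one_div_le_one_div_of_le (by positivity)
          linarith
        have h2 : Γ * (2 * s) ≤ 1 := by
          rw [le_div_iff₀ (by positivity)] at hΓs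
          linarith
        have hexp : -v k / s * v k + L / 2 * ((-v k / s) ^ 2 * ‖p k - x k‖ ^ 2)
            = -(v k ^ 2 / (2 * s)) := by
          field_simp [hsdef]
          ring
        rw [hexp]
        have : Γ * v k ^ 2 ≤ v k ^ 2 / (2 * s) := by
          rw [le_div_iff₀ (by positivity)]
          nlinarith [sq_nonneg (v k)]
        linarith
      · have hlameq : lam k = 1 := by
          rw [hlam]
          exact min_eq_left (by
            rw [le_div_iff₀ hs]
            linarith)
        rw [hlameq]
        have h1 : v k + s / 2 ≤ v k / 2 := by
          have : s < -v k := by rw [← hm]; exact hms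
          linarith
        have h2 : Γ * (2 * (γ * σ)) ≤ 1 := by
          have : (0:ℝ) < 2 * γ * σ := by positivity
          rw [le_div_iff₀ this] at hΓ1
          linarith
        have h3 : Γ * (v k) ^ 2 ≤ -v k / 2 := by
          have hvk : -v k ≤ γ * σ := by rw [← hm]; exact hmγσ
          nlinarith [hvneg k, hΓpos]
        have : 1 * v k + L / 2 * (1 ^ 2 * ‖p k - x k‖ ^ 2) = v k + s / 2 := by
          rw [hsdef]; ring
        rw [this]
        linarith
    linarith
  have hh0 : ∀ k, 0 ≤ f (x k) - f xstar := fun k => sub_nonneg.mpr (hopt _ (hxC k))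
  have hvh : ∀ k, f (x k) - f xstar ≤ |v k| := by
    intro k
    have h1 : v k ≤ ⟪gradient f (x k), xstar - x k⟫ := hv k ▸ hpmin k xstar hxstar
    have h2 := fw_convex_lower f hf hconv (x k) xstar
    rw [abs_of_neg (hvneg k)]
    linarith
  have hrec : ∀ k, f (x (k + 1)) - f xstar
      ≤ (f (x k) - f xstar) - Γ * (f (x k) - f xstar) ^ 2 := by
    intro k
    have h1 := hstep k
    have h2 : (f (x k) - f xstar) ^ 2 ≤ (v k) ^ 2 := by
      rw [← sq_abs (v k)]
      exact pow_le_pow_left₀ (hh0 k) (hvh k) 2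
    nlinarith [hΓpos]
  have hinv : ∀ k : ℕ, 1 ≤ k →
      f (x k) - f xstar ≤ 1 / (4 * Γ) ∧ f (x k) - f xstar ≤ 1 / (Γ * k) := by
    intro k hk
    induction k, hk using Nat.le_induction with
    | base =>
      have h01 := hrec 0
      have h00 := hh0 0
      have hb : f (x 1) - f xstar ≤ 1 / (4 * Γ) := by
        rw [le_div_iff₀ (by positivity)]
        nlinarith [sq_nonneg (2 * Γ * (f (x 0) - f xstar) - 1)]
      refine ⟨hb, ?_⟩
      refine le_trans hb ?_
      rw [Nat.cast_one, mul_one]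
      apply one_div_le_one_div_of_le hΓpos
      linarith
    | succ k hk ih =>
      obtain ⟨ih1, ih2⟩ := ih
      have hr := hrec k
      have ht0 := hh0 k
      set t : ℝ := f (x k) - f xstar with htdef
      have hκ1 : (1 : ℝ) ≤ (k : ℝ) := by exact_mod_cast hk
      have e1 : 0 ≤ 1 - 4 * Γ * t := by
        rw [le_div_iff₀ (by positivity)] at ih1
        linarith
      have e2 : 0 ≤ 1 - Γ * (k : ℝ) * t := by
        have : (0:ℝ) < Γ * (k : ℝ) := by positivity
        rw [le_div_iff₀ this] at ih2
        linarith
      have hmain : t - Γ * t ^ 2 ≤ 1 / (Γ * ((k : ℝ) + 1)) := by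
        rw [le_div_iff₀ (by positivity)]
        nlinarith [mul_nonneg e1 e2, mul_nonneg (mul_nonneg hΓpos.le ht0) e2, sq_nonneg (Γ * t)]
      constructor
      · refine le_trans ?_ ih1
        nlinarith [sq_nonneg t, hΓpos]
      · push_cast
        calc f (x (k + 1)) - f xstar ≤ t - Γ * t ^ 2 := hr
          _ ≤ 1 / (Γ * ((k : ℝ) + 1)) := hmain
  intro k hk
  exact (hinv k hk).2
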